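/- arXiv:2206.02092 — 2 statements merged into one kernel-verified Lean document; each statement's English description precedes it below -/
import Mathlib

section
/- Let e_1,...,e_d be independent Rademacher random variables and a ∈ ℝ^d. Then E[|∑_{i=1}^d a_i e_i|] ≥ (1/√2) ‖a‖_2, where ‖a‖_2 is the Euclidean norm. -/
open MeasureTheory ProbabilityTheory Finset
open scoped ENNReal

namespace Stmt2Aux

variable {d : ℕ}

/-- sign vector associated to a boolean vector -/
def sg (σ : Fin d → Bool) : Fin d → ℝ := fun i => if σ i then 1 else -1

lemma sg_mul_self (σ : Fin d → Bool) (i : Fin d) : sg σ i * sg σ i = 1 := by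
  unfold sg; split <;> norm_num

lemma sg_abs (σ : Fin d → Bool) (i : Fin d) : |sg σ i| = 1 := by
  unfold sg; split <;> norm_num

/-- character -/
def ch (A : Finset (Fin d)) (σ : Fin d → Bool) : ℝ := ∏ i ∈ A, sg σ i

def flip (i : Fin d) (σ : Fin d → Bool) : Fin d → Bool := Function.update σ i (!σ i)

lemma flip_invol (i : Fin d) : Function.Involutive (flip i) := by
  intro σ
  unfold flip
  simp [Function.update_idem]

lemma sg_flip (i : Fin d) (σ : Fin d → Bool) (j : Fin d) :
    sg (flip i σ) j = if j = i then -(sg σ j) else sg σ j := by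
  unfold flip sg Function.update
  by_cases h : j = i
  · subst h; simp; cases σ j <;> norm_num
  · simp [h]

lemma ch_flip (i : Fin d) (A : Finset (Fin d)) (σ : Fin d → Bool) :
    ch A (flip i σ) = (if i ∈ A then -1 else 1) * ch A σ := by
  unfold ch
  have h : ∀ j ∈ A, sg (flip i σ) j = (if j = i then (-1:ℝ) else 1) * sg σ j := by
    intro j _
    rw [sg_flip]
    split <;> ring
  rw [prod_congr rfl h, prod_mul_distrib, prod_ite_eq' A i (fun _ => (-1:ℝ))]

lemma sum_neg_invol (t : (Fin d → Bool) → (Fin d → Bool)) (ht : Function.Involutive t)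
    (g : (Fin d → Bool) → ℝ) (hg : ∀ σ, g (t σ) = - g σ) : ∑ σ, g σ = 0 := by
  have h1 : ∑ σ, g (t σ) = ∑ σ, g σ :=
    Fintype.sum_bijective t ht.bijective _ _ (fun σ => rfl)
  have h2 : ∑ σ, g (t σ) = - ∑ σ, g σ := by
    rw [← Finset.sum_neg_distrib]
    exact Fintype.sum_congr _ _ hg
  linarith

lemma sum_reindex_invol (t : (Fin d → Bool) → (Fin d → Bool)) (ht : Function.Involutive t)
    (g : (Fin d → Bool) → ℝ) : ∑ σ, g (t σ) = ∑ σ, g σ :=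
  Fintype.sum_bijective t ht.bijective _ _ (fun σ => rfl)

lemma card_cube : (Fintype.card (Fin d → Bool) : ℝ) = 2 ^ d := by
  simp [Fintype.card_fun]

/-- orthogonality of points -/
lemma orth (σ τ : Fin d → Bool) :
    ∑ A : Finset (Fin d), ch A σ * ch A τ = if σ = τ then (2:ℝ) ^ d else 0 := by
  have key : ∀ A : Finset (Fin d), ch A σ * ch A τ = ∏ i ∈ A, (sg σ i * sg τ i) := by
    intro A; unfold ch; rw [← prod_mul_distrib]
  simp_rw [key]
  have huniv : (univ : Finset (Finset (Fin d))) = (univ : Finset (Fin d)).powerset := by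
    simp
  rw [huniv]
  have := Finset.prod_add (fun i => sg σ i * sg τ i) (fun _ => (1:ℝ)) univ
  simp only [prod_const_one, mul_one] at this
  rw [← this]
  by_cases h : σ = τ
  · subst h
    simp only [if_pos rfl]
    rw [Finset.prod_congr rfl (fun i _ => by rw [sg_mul_self])]
    norm_num
  · rw [if_neg h]
    obtain ⟨i, hi⟩ : ∃ i, σ i ≠ τ i := by
      by_contra hc
      push_neg at hc
      exact h (funext hc)
    apply Finset.prod_eq_zero (mem_univ i)
    have : sg σ i * sg τ i = -1 := by
      unfold sg
      cases hσ : σ i <;> cases hτ : τ i <;> simp_all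
    rw [this]; ring

def coef (g : (Fin d → Bool) → ℝ) (A : Finset (Fin d)) : ℝ := ∑ σ, g σ * ch A σ

lemma inversion (g : (Fin d → Bool) → ℝ) (σ : Fin d → Bool) :
    ∑ A : Finset (Fin d), coef g A * ch A σ = 2 ^ d * g σ := by
  unfold coef
  simp_rw [Finset.sum_mul, mul_assoc]
  rw [Finset.sum_comm]
  have : ∀ τ : Fin d → Bool, ∑ A : Finset (Fin d), g τ * (ch A τ * ch A σ)
      = g τ * (if τ = σ then (2:ℝ)^d else 0) := by
    intro τ
    rw [← Finset.mul_sum, orth]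
  simp_rw [this]
  simp [Finset.sum_ite_eq', mul_comm]

lemma parseval (g : (Fin d → Bool) → ℝ) :
    ∑ A : Finset (Fin d), (coef g A) ^ 2 = 2 ^ d * ∑ σ, g σ ^ 2 := by
  have h : ∀ A : Finset (Fin d), (coef g A) ^ 2 = ∑ σ, g σ * (coef g A * ch A σ) := by
    intro A
    rw [sq]
    nth_rewrite 2 [coef]
    rw [Finset.mul_sum]
    congr 1; ext σ; ring
  simp_rw [h]
  rw [Finset.sum_comm]
  have h2 : ∀ σ : Fin d → Bool, ∑ A : Finset (Fin d), g σ * (coef g A * ch A σ)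
      = 2 ^ d * g σ ^ 2 := by
    intro σ
    rw [← Finset.mul_sum, inversion]
    ring
  simp_rw [h2]
  rw [← Finset.mul_sum]

lemma coef_flip_diff (f : (Fin d → Bool) → ℝ) (i : Fin d) (A : Finset (Fin d)) :
    coef (fun σ => f σ - f (flip i σ)) A = if i ∈ A then 2 * coef f A else 0 := by
  unfold coef
  simp_rw [sub_mul]
  rw [Finset.sum_sub_distrib]
  have h : ∑ σ, f (flip i σ) * ch A σ
      = (if i ∈ A then (-1:ℝ) else 1) * ∑ σ, f σ * ch A σ := by
    have h0 := sum_reindex_invol (flip i) (flip_invol i) (fun σ => f (flip i σ) * ch A σ)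
    have h1 : ∀ σ, f (flip i (flip i σ)) * ch A (flip i σ)
        = (if i ∈ A then (-1:ℝ) else 1) * (f σ * ch A σ) := by
      intro σ
      rw [flip_invol i σ, ch_flip]
      ring
    rw [← h0]
    simp_rw [h1]
    rw [← Finset.mul_sum]
  rw [h]
  split <;> ring

lemma coord_orth (i j : Fin d) :
    ∑ σ : Fin d → Bool, sg σ i * sg σ j = if i = j then (2:ℝ)^d else 0 := by
  by_cases h : i = j
  · subst h
    rw [if_pos rfl]
    have : ∀ σ : Fin d → Bool, sg σ i * sg σ i = 1 := fun σ => sg_mul_self σ i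
    simp_rw [this]
    rw [Finset.sum_const, card_univ, nsmul_eq_mul, card_cube, mul_one]
  · rw [if_neg h]
    apply sum_neg_invol (flip i) (flip_invol i)
    intro σ
    rw [sg_flip, sg_flip, if_pos rfl, if_neg (fun hc => h hc.symm)]
    ring

lemma sum_sq_S (a : Fin d → ℝ) :
    ∑ σ : Fin d → Bool, (∑ i, a i * sg σ i) ^ 2 = 2 ^ d * ∑ i, a i ^ 2 := by
  have h : ∀ σ : Fin d → Bool, (∑ i, a i * sg σ i) ^ 2
      = ∑ i, ∑ j, (a i * a j) * (sg σ i * sg σ j) := by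
    intro σ
    rw [sq, Finset.sum_mul_sum]
    congr 1; ext i; congr 1; ext j; ring
  simp_rw [h]
  rw [Finset.sum_comm]
  have h2 : ∀ i, ∑ σ : Fin d → Bool, ∑ j, (a i * a j) * (sg σ i * sg σ j)
      = 2 ^ d * a i ^ 2 := by
    intro i
    rw [Finset.sum_comm]
    have h3 : ∀ j, ∑ σ : Fin d → Bool, (a i * a j) * (sg σ i * sg σ j)
        = (a i * a j) * (if i = j then (2:ℝ)^d else 0) := by
      intro j
      rw [← Finset.mul_sum, coord_orth]
    simp_rw [h3, mul_ite, mul_zero]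
    rw [Finset.sum_ite_eq univ i (fun j => a i * a j * (2:ℝ)^d), if_pos (mem_univ i)]
    ring
  simp_rw [h2]
  rw [← Finset.mul_sum]
lemma S_flip (a : Fin d → ℝ) (i : Fin d) (σ : Fin d → Bool) :
    ∑ j, a j * sg (flip i σ) j = (∑ j, a j * sg σ j) - 2 * a i * sg σ i := by
  have h : ∀ j, a j * sg (flip i σ) j
      = a j * sg σ j - (if j = i then 2 * a i * sg σ i else 0) := by
    intro j
    unfold flip sg Function.update
    by_cases hj : j = i
    · subst hj; simp only [if_pos rfl, eq_self_iff_true]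
      cases σ j <;> simp <;> ring
    · simp [hj]
  simp_rw [h]
  rw [Finset.sum_sub_distrib, Finset.sum_ite_eq' univ i, if_pos (mem_univ i)]

lemma S_neg (a : Fin d → ℝ) (σ : Fin d → Bool) :
    ∑ j, a j * sg (fun k => !σ k) j = - ∑ j, a j * sg σ j := by
  rw [← Finset.sum_neg_distrib]
  apply Finset.sum_congr rfl
  intro j _
  unfold sg
  cases hσ : σ j <;> simp [hσ]

theorem discrete (a : Fin d → ℝ) :
    Real.sqrt (∑ i, a i ^ 2) / Real.sqrt 2
      ≤ ((2:ℝ) ^ d)⁻¹ * ∑ σ : Fin d → Bool, |∑ i, a i * sg σ i| := by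
  set N : ℝ := (2:ℝ) ^ d with hNdef
  have hN : (0:ℝ) < N := pow_pos two_pos d
  set f : (Fin d → Bool) → ℝ := fun σ => |∑ i, a i * sg σ i| with hf
  set c : Finset (Fin d) → ℝ := fun A => coef f A with hc
  -- Parseval for f
  have hP : ∑ A : Finset (Fin d), c A ^ 2 = N ^ 2 * ∑ i, a i ^ 2 := by
    have := parseval f
    simp only [hf, sq_abs] at this
    rw [hc]
    simp only [hf]
    rw [this, sum_sq_S]
    ring
  -- singleton coefficients vanish
  have hsingle : ∀ i, c {i} = 0 := by
    intro i
    apply sum_neg_invol (fun σ k => !σ k) (fun σ => by funext k; simp)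
    intro σ
    have h1 : f (fun k => !σ k) = f σ := by
      simp only [hf, S_neg, abs_neg]
    have h2 : ch {i} (fun k => !σ k) = - ch {i} σ := by
      unfold ch
      rw [prod_singleton, prod_singleton]
      unfold sg; cases hσ : σ i <;> simp [hσ]
    rw [h1, h2]
    ring
  -- derivative bound
  have hderiv : ∀ i, ∑ A : Finset (Fin d), (if i ∈ A then c A ^ 2 else 0)
      ≤ N ^ 2 * a i ^ 2 := by
    intro i
    have hg : ∀ σ, (f σ - f (flip i σ)) ^ 2 ≤ 4 * a i ^ 2 := by
      intro σ
      have habs : |f σ - f (flip i σ)| ≤ 2 * |a i| := by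
        have h1 := abs_abs_sub_abs_le_abs_sub (∑ j, a j * sg σ j) (∑ j, a j * sg (flip i σ) j)
        have h2 : (∑ j, a j * sg σ j) - (∑ j, a j * sg (flip i σ) j) = 2 * a i * sg σ i := by
          rw [S_flip]; ring
        rw [h2] at h1
        simp only [hf]
        calc |(|∑ j, a j * sg σ j|) - (|∑ j, a j * sg (flip i σ) j|)| ≤ |2 * a i * sg σ i| := h1
          _ = 2 * |a i| := by rw [abs_mul, sg_abs, mul_one, abs_mul]; norm_num
      calc (f σ - f (flip i σ)) ^ 2 = |f σ - f (flip i σ)| ^ 2 := (sq_abs _).symm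
        _ ≤ (2 * |a i|) ^ 2 := by
            apply pow_le_pow_left₀ (abs_nonneg _) habs
        _ = 4 * a i ^ 2 := by rw [mul_pow, sq_abs]; norm_num
    have hsum : ∑ σ : Fin d → Bool, (f σ - f (flip i σ)) ^ 2 ≤ N * (4 * a i ^ 2) := by
      calc ∑ σ : Fin d → Bool, (f σ - f (flip i σ)) ^ 2
          ≤ ∑ _σ : Fin d → Bool, 4 * a i ^ 2 := Finset.sum_le_sum (fun σ _ => hg σ)
        _ = N * (4 * a i ^ 2) := by
            rw [Finset.sum_const, card_univ, nsmul_eq_mul, card_cube]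
    have hpar := parseval (fun σ => f σ - f (flip i σ))
    simp_rw [coef_flip_diff f i] at hpar
    have hL : ∀ A : Finset (Fin d),
        (if i ∈ A then 2 * coef f A else 0) ^ 2 = 4 * (if i ∈ A then c A ^ 2 else 0) := by
      intro A
      rw [hc]
      split <;> ring
    simp_rw [hL] at hpar
    rw [← Finset.mul_sum] at hpar
    have hle : N * ∑ σ, (f σ - f (flip i σ)) ^ 2 ≤ N * (N * (4 * a i ^ 2)) :=
      mul_le_mul_of_nonneg_left hsum hN.le
    nlinarith [hpar, hle]
  -- swap sums: weighted-by-card bound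
  have hcard : ∑ A : Finset (Fin d), (A.card : ℝ) * c A ^ 2
      ≤ ∑ A : Finset (Fin d), c A ^ 2 := by
    have hswap : ∑ A : Finset (Fin d), (A.card : ℝ) * c A ^ 2
        = ∑ i, ∑ A : Finset (Fin d), (if i ∈ A then c A ^ 2 else 0) := by
      rw [Finset.sum_comm]
      apply Finset.sum_congr rfl
      intro A _
      rw [Finset.sum_ite_mem, univ_inter, Finset.sum_const, nsmul_eq_mul]
    rw [hswap]
    calc ∑ i, ∑ A : Finset (Fin d), (if i ∈ A then c A ^ 2 else 0)
        ≤ ∑ i, N ^ 2 * a i ^ 2 := Finset.sum_le_sum (fun i _ => hderiv i)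
      _ = N ^ 2 * ∑ i, a i ^ 2 := by rw [← Finset.mul_sum]
      _ = ∑ A : Finset (Fin d), c A ^ 2 := hP.symm
  have hempty : c ∅ = ∑ σ, f σ := by
    rw [hc]
    unfold coef ch
    simp
  have hnn : 0 ≤ c ∅ := by
    rw [hempty]
    exact Finset.sum_nonneg (fun σ _ => abs_nonneg _)
  have key : N ^ 2 * ∑ i, a i ^ 2 ≤ 2 * c ∅ ^ 2 := by
    have hsplit : ∑ A : Finset (Fin d), c A ^ 2
        = c ∅ ^ 2 + ∑ A ∈ univ.erase ∅, c A ^ 2 :=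
      (Finset.add_sum_erase univ (fun A => c A ^ 2) (mem_univ ∅)).symm
    have hsplit2 : ∑ A : Finset (Fin d), (A.card : ℝ) * c A ^ 2
        = (0:ℝ) + ∑ A ∈ univ.erase ∅, (A.card : ℝ) * c A ^ 2 := by
      rw [← Finset.add_sum_erase univ _ (mem_univ ∅)]
      simp
    have hb : ∑ A ∈ univ.erase ∅, c A ^ 2
        ≤ ∑ A ∈ univ.erase ∅, ((A.card : ℝ) - 1) * c A ^ 2 := by
      apply Finset.sum_le_sum
      intro A hA
      have hAne : A ≠ ∅ := (Finset.mem_erase.mp hA).1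
      have hpos : 1 ≤ A.card := Finset.card_pos.mpr (Finset.nonempty_of_ne_empty hAne)
      rcases Nat.lt_or_ge A.card 2 with h2 | h2
      · have hone : A.card = 1 := by omega
        obtain ⟨i, rfl⟩ := Finset.card_eq_one.mp hone
        rw [hsingle i]
        norm_num
      · have h2' : (2:ℝ) ≤ (A.card : ℝ) := by exact_mod_cast h2
        nlinarith [sq_nonneg (c A)]
    have expand : ∑ A ∈ univ.erase ∅, ((A.card : ℝ) - 1) * c A ^ 2
        = ∑ A ∈ univ.erase ∅, (A.card : ℝ) * c A ^ 2 - ∑ A ∈ univ.erase ∅, c A ^ 2 := by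
      rw [← Finset.sum_sub_distrib]
      apply Finset.sum_congr rfl
      intro A _
      ring
    have hchain := hcard
    rw [hsplit2, hsplit] at hchain
    have h1 : ∑ A ∈ univ.erase ∅, ((A.card : ℝ) - 1) * c A ^ 2 ≤ c ∅ ^ 2 := by
      rw [expand]; linarith
    have h2 : ∑ A ∈ univ.erase ∅, c A ^ 2 ≤ c ∅ ^ 2 := le_trans hb h1
    calc N ^ 2 * ∑ i, a i ^ 2 = ∑ A : Finset (Fin d), c A ^ 2 := hP.symm
      _ = c ∅ ^ 2 + ∑ A ∈ univ.erase ∅, c A ^ 2 := hsplit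
      _ ≤ 2 * c ∅ ^ 2 := by linarith
  -- conclude
  have ht : 0 ≤ N⁻¹ * c ∅ := mul_nonneg (inv_nonneg.mpr hN.le) hnn
  have hsum2 : ∑ i, a i ^ 2 ≤ 2 * (N⁻¹ * c ∅) ^ 2 := by
    have hN2 : (0:ℝ) < N ^ 2 := by positivity
    calc ∑ i, a i ^ 2 = (N ^ 2)⁻¹ * (N ^ 2 * ∑ i, a i ^ 2) := by field_simp
      _ ≤ (N ^ 2)⁻¹ * (2 * c ∅ ^ 2) := mul_le_mul_of_nonneg_left key (by positivity)
      _ = 2 * (N⁻¹ * c ∅) ^ 2 := by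
          field_simp
  have hsqrt : Real.sqrt (∑ i, a i ^ 2) ≤ Real.sqrt 2 * (N⁻¹ * c ∅) := by
    have h := Real.sqrt_le_sqrt hsum2
    rwa [Real.sqrt_mul (by norm_num) _, Real.sqrt_sq ht] at h
  rw [div_le_iff₀ (Real.sqrt_pos.mpr two_pos)]
  calc Real.sqrt (∑ i, a i ^ 2) ≤ Real.sqrt 2 * (N⁻¹ * c ∅) := hsqrt
    _ = N⁻¹ * (∑ σ, f σ) * Real.sqrt 2 := by rw [hempty]; ring
end Stmt2Aux

open Stmt2Aux

/-- Khintchine first-moment lower bound with Haagerup's constant 1/√2. -/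
theorem stmt_2 (d : ℕ) (Ω : Type*) [MeasureSpace Ω] [IsProbabilityMeasure (ℙ : Measure Ω)]
    (a : Fin d → ℝ) (e : Fin d → Ω → ℝ)
    (hmeas : ∀ i, Measurable (e i))
    (hind : iIndepFun e ℙ)
    (hrad : ∀ i, ℙ {ω | e i ω = 1} = 1 / 2 ∧ ℙ {ω | e i ω = -1} = 1 / 2) :
    Real.sqrt (∑ i, a i ^ 2) / Real.sqrt 2 ≤ ∫ ω, |∑ i, a i * e i ω| := by
  classical
  set μ : Fin d → Measure ℝ := fun i => Measure.map (e i) ℙ with hμ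
  haveI : ∀ i, IsProbabilityMeasure (μ i) :=
    fun i => Measure.isProbabilityMeasure_map (hmeas i).aemeasurable
  -- identify the individual laws
  have hlaw : ∀ i, μ i = (2⁻¹ : ℝ≥0∞) • Measure.dirac (1:ℝ)
      + (2⁻¹ : ℝ≥0∞) • Measure.dirac (-1:ℝ) := by
    intro i
    obtain ⟨h1, h2⟩ := hrad i
    have hA : MeasurableSet {ω | e i ω = 1} := (hmeas i) (measurableSet_singleton 1)
    have hB : MeasurableSet {ω | e i ω = -1} := (hmeas i) (measurableSet_singleton (-1))
    have hAB : Disjoint {ω | e i ω = 1} {ω | e i ω = -1} := by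
      rw [Set.disjoint_left]
      intro ω hω1 hω2
      simp only [Set.mem_setOf_eq] at hω1 hω2
      rw [hω1] at hω2
      norm_num at hω2
    have hfull : ℙ ({ω | e i ω = 1} ∪ {ω | e i ω = -1}) = 1 := by
      rw [measure_union hAB hB, h1, h2, one_div]
      exact ENNReal.inv_two_add_inv_two
    have hcompl : ℙ (({ω | e i ω = 1} ∪ {ω | e i ω = -1})ᶜ) = 0 := by
      rw [measure_compl (hA.union hB) (measure_ne_top _ _), hfull, measure_univ]
      simp
    apply Measure.ext
    intro s hs
    rw [hμ]
    rw [Measure.map_apply (hmeas i) hs]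
    set U := e i ⁻¹' s with hU
    have hUmeas : MeasurableSet U := (hmeas i) hs
    have hsplit : ℙ U = ℙ (U ∩ {ω | e i ω = 1}) + ℙ (U ∩ {ω | e i ω = -1}) := by
      have h3 := measure_inter_add_diff (μ := ℙ) U (hA.union hB)
      have h4 : ℙ (U \ ({ω | e i ω = 1} ∪ {ω | e i ω = -1})) = 0 :=
        measure_mono_null (fun x hx => hx.2) hcompl
      have h5 : U ∩ ({ω | e i ω = 1} ∪ {ω | e i ω = -1})
          = (U ∩ {ω | e i ω = 1}) ∪ (U ∩ {ω | e i ω = -1}) := Set.inter_union_distrib_left ..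
      rw [h5] at h3
      rw [measure_union (hAB.mono Set.inter_subset_right Set.inter_subset_right)
        (hUmeas.inter hB)] at h3
      rw [← h3, h4, add_zero]
    have hUA : ℙ (U ∩ {ω | e i ω = 1}) = if (1:ℝ) ∈ s then 2⁻¹ else 0 := by
      by_cases h1s : (1:ℝ) ∈ s
      · rw [if_pos h1s]
        have : U ∩ {ω | e i ω = 1} = {ω | e i ω = 1} := by
          apply Set.inter_eq_self_of_subset_right
          intro ω hω
          simp only [Set.mem_setOf_eq] at hω
          simp only [hU, Set.mem_preimage, hω]
          exact h1s
        rw [this, h1, one_div]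
      · rw [if_neg h1s]
        have : U ∩ {ω | e i ω = 1} = ∅ := by
          ext ω
          simp only [Set.mem_inter_iff, Set.mem_empty_iff_false, iff_false, not_and,
            hU, Set.mem_preimage, Set.mem_setOf_eq]
          intro hωs hω1
          rw [hω1] at hωs
          exact h1s hωs
        rw [this, measure_empty]
    have hUB : ℙ (U ∩ {ω | e i ω = -1}) = if (-1:ℝ) ∈ s then 2⁻¹ else 0 := by
      by_cases h1s : (-1:ℝ) ∈ s
      · rw [if_pos h1s]
        have : U ∩ {ω | e i ω = -1} = {ω | e i ω = -1} := by
          apply Set.inter_eq_self_of_subset_right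
          intro ω hω
          simp only [Set.mem_setOf_eq] at hω
          simp only [hU, Set.mem_preimage, hω]
          exact h1s
        rw [this, h2, one_div]
      · rw [if_neg h1s]
        have : U ∩ {ω | e i ω = -1} = ∅ := by
          ext ω
          simp only [Set.mem_inter_iff, Set.mem_empty_iff_false, iff_false, not_and,
            hU, Set.mem_preimage, Set.mem_setOf_eq]
          intro hωs hω1
          rw [hω1] at hωs
          exact h1s hωs
        rw [this, measure_empty]
    rw [hsplit, hUA, hUB]
    rw [Measure.add_apply, Measure.smul_apply, Measure.smul_apply,
      Measure.dirac_apply' _ hs, Measure.dirac_apply' _ hs]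
    simp only [Set.indicator_apply, Set.mem_singleton_iff, smul_eq_mul]
    split_ifs <;> simp
  -- the map to the product space
  have hφ : Measurable (fun ω => fun i => e i ω) := measurable_pi_lambda _ hmeas
  have hmap : Measure.map (fun ω => fun i => e i ω) ℙ = Measure.pi μ := by
    refine (Measure.pi_eq ?_).symm
    intro s hs
    rw [Measure.map_apply hφ (MeasurableSet.univ_pi hs)]
    have hpre : (fun ω => fun i => e i ω) ⁻¹' (Set.pi Set.univ s) = ⋂ i, e i ⁻¹' s i := by
      ext ω
      simp [Set.mem_pi]
    rw [hpre, hind.meas_iInter (fun i => ⟨s i, hs i, rfl⟩)]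
    exact Finset.prod_congr rfl (fun i _ => (Measure.map_apply (hmeas i) (hs i)).symm)
  -- the product measure is the uniform measure on sign vectors
  have hpi : Measure.pi μ
      = ((2:ℝ≥0∞) ^ d)⁻¹ • ∑ σ : Fin d → Bool, Measure.dirac (sg σ) := by
    apply Measure.pi_eq
    intro s hs
    have hps : MeasurableSet (Set.pi Set.univ s) := MeasurableSet.univ_pi hs
    rw [Measure.smul_apply, Measure.finset_sum_apply]
    have hdirac : ∀ σ : Fin d → Bool, Measure.dirac (sg σ) (Set.pi Set.univ s)
        = ∏ i, (if sg σ i ∈ s i then (1:ℝ≥0∞) else 0) := by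
      intro σ
      rw [Measure.dirac_apply' _ hps]
      by_cases h : ∀ i, sg σ i ∈ s i
      · rw [Set.indicator_of_mem (by simpa [Set.mem_pi] using h)]
        rw [Finset.prod_congr rfl (fun i _ => if_pos (h i))]
        simp
      · rw [Set.indicator_of_notMem (by simpa [Set.mem_pi] using h)]
        push_neg at h
        obtain ⟨i, hi⟩ := h
        exact (Finset.prod_eq_zero (mem_univ i)
          (if_neg hi : (if sg σ i ∈ s i then (1:ℝ≥0∞) else 0) = 0)).symm
    simp_rw [hdirac]
    have hprodsum : ∑ σ : Fin d → Bool, ∏ i, (if sg σ i ∈ s i then (1:ℝ≥0∞) else 0)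
        = ∏ i, ((if (1:ℝ) ∈ s i then (1:ℝ≥0∞) else 0) + (if (-1:ℝ) ∈ s i then (1:ℝ≥0∞) else 0)) := by
      have := Finset.prod_univ_sum (fun _ : Fin d => (Finset.univ : Finset Bool))
        (fun i b => if (if b then (1:ℝ) else -1) ∈ s i then (1:ℝ≥0∞) else 0)
      rw [Fintype.piFinset_univ] at this
      unfold sg
      rw [← this]
      apply Finset.prod_congr rfl
      intro i _
      rw [Fintype.sum_bool]
      norm_num
    rw [hprodsum]
    have hμs : ∀ i, μ i (s i)
        = 2⁻¹ * ((if (1:ℝ) ∈ s i then (1:ℝ≥0∞) else 0) + (if (-1:ℝ) ∈ s i then (1:ℝ≥0∞) else 0)) := by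
      intro i
      rw [hlaw i, Measure.add_apply, Measure.smul_apply, Measure.smul_apply,
        Measure.dirac_apply' _ (hs i), Measure.dirac_apply' _ (hs i)]
      simp only [Set.indicator_apply, smul_eq_mul, Set.mem_singleton_iff, Pi.one_apply]
      rw [mul_add]
    simp_rw [hμs]
    rw [Finset.prod_mul_distrib, Finset.prod_const, card_univ, Fintype.card_fin]
    rw [smul_eq_mul, ← ENNReal.inv_pow]
  -- now compute the integral
  set F : (Fin d → ℝ) → ℝ := fun x => |∑ i, a i * x i| with hF
  have hFcont : Continuous F := by
    apply continuous_abs.comp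
    exact continuous_finset_sum _ (fun i _ => continuous_const.mul (continuous_apply i))
  have hint : ∫ ω, |∑ i, a i * e i ω| = ∫ x, F x ∂(Measure.map (fun ω => fun i => e i ω) ℙ) := by
    rw [integral_map hφ.aemeasurable hFcont.aestronglyMeasurable]
  have hintegr : ∀ σ : Fin d → Bool, Integrable F (Measure.dirac (sg σ)) := by
    intro σ
    constructor
    · exact hFcont.aestronglyMeasurable
    · rw [HasFiniteIntegral]
      rw [lintegral_dirac]
      exact ENNReal.coe_lt_top
  have hval : ∫ x, F x ∂(Measure.map (fun ω => fun i => e i ω) ℙ)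
      = ((2:ℝ) ^ d)⁻¹ * ∑ σ : Fin d → Bool, |∑ i, a i * sg σ i| := by
    rw [hmap, hpi, integral_smul_measure, integral_finset_sum_measure (fun σ _ => hintegr σ)]
    have : ∀ σ : Fin d → Bool, ∫ x, F x ∂(Measure.dirac (sg σ)) = |∑ i, a i * sg σ i| := by
      intro σ
      rw [integral_dirac]
    simp_rw [this]
    rw [smul_eq_mul]
    congr 1
    rw [ENNReal.toReal_inv, ENNReal.toReal_pow, ENNReal.toReal_ofNat]
  rw [hint, hval]
  exact discrete a
end

section
/- Let A ⪰ B ≻ 0 be positive definite d×d matrices. Then for every x ∈ ℝ^d with x ≠ 0, (x^⊤ A x)/(x^⊤ B x) ≤ det(A)/det(B). -/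
open Matrix

lemma key_lemma (d : ℕ) (M : Matrix (Fin d) (Fin d) ℝ) (hM : M.IsHermitian)
    (h1 : (M - 1).PosSemidef) (y : Fin d → ℝ) :
    y ⬝ᵥ M.mulVec y ≤ M.det * (y ⬝ᵥ y) := by
  set μ := hM.eigenvalues with hμ
  have hone : ∀ i, 1 ≤ μ i := by
    intro i
    set v : Fin d → ℝ := ⇑(hM.eigenvectorBasis i) with hv
    have hvv : star v ⬝ᵥ v = 1 := by
      have hb := hM.eigenvectorBasis.orthonormal.1 i
      have h2 : (inner ℝ (hM.eigenvectorBasis i) (hM.eigenvectorBasis i) : ℝ) = star v ⬝ᵥ v :=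
        EuclideanSpace.inner_eq_star_dotProduct _ _
      rw [real_inner_self_eq_norm_sq, hb] at h2
      simpa using h2.symm
    have hpos := h1.dotProduct_mulVec_nonneg v
    have heig : μ i = star v ⬝ᵥ (M *ᵥ v) := hM.eigenvalues_eq i
    rw [sub_mulVec, dotProduct_sub, one_mulVec, hvv] at hpos
    rw [heig]
    linarith [hpos]
  set U : Matrix (Fin d) (Fin d) ℝ := (hM.eigenvectorUnitary : Matrix (Fin d) (Fin d) ℝ) with hU
  have hUU : U * star U = 1 := (Matrix.mem_unitaryGroup_iff).mp hM.eigenvectorUnitary.2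
  have hstar : star U = Uᵀ := rfl
  set c : Fin d → ℝ := Uᵀ *ᵥ y with hc
  have hquad : y ⬝ᵥ M.mulVec y = ∑ i, μ i * (c i)^2 := by
    conv_lhs => rw [hM.spectral_theorem]
    rw [Unitary.conjStarAlgAut_apply, hstar, ← mulVec_mulVec, ← mulVec_mulVec, dotProduct_mulVec, ← mulVec_transpose, ← hc]
    simp [dotProduct, mulVec_diagonal]
    exact Finset.sum_congr rfl fun i _ => by ring
  have hnorm : y ⬝ᵥ y = ∑ i, (c i)^2 := by
    have hcc : c ⬝ᵥ c = y ⬝ᵥ y := by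
      rw [hc, dotProduct_mulVec, vecMul_transpose, mulVec_mulVec, ← hstar, hUU, one_mulVec]
    rw [← hcc]
    simp [dotProduct]
    exact Finset.sum_congr rfl fun i _ => by ring
  have hdet : M.det = ∏ i, μ i := by simpa using hM.det_eq_prod_eigenvalues
  rw [hquad, hnorm, hdet, Finset.mul_sum]
  apply Finset.sum_le_sum
  intro i _
  have hle : μ i ≤ ∏ j, μ j := by
    have := Finset.prod_le_prod (s := Finset.univ) (f := fun j => if j = i then μ i else 1) (g := μ)
      (fun j _ => by split <;> [linarith [hone i]; norm_num])
      (fun j _ => by split <;> [simp_all; exact hone j])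
    simpa using this
  exact mul_le_mul_of_nonneg_right hle (sq_nonneg _)

/-- determinant comparison of quadratic forms for A ⪰ B ≻ 0. -/
theorem stmt_14 (d : ℕ) (A B : Matrix (Fin d) (Fin d) ℝ)
    (hB : B.PosDef) (hAB : (A - B).PosSemidef)
    (x : Fin d → ℝ) (hx : x ≠ 0) :
    (x ⬝ᵥ A.mulVec x) / (x ⬝ᵥ B.mulVec x) ≤ A.det / B.det := by
  open scoped MatrixOrder in set S := CFC.sqrt B with hS
  have hSsd : S.PosSemidef := by open scoped MatrixOrder in exact (CFC.sqrt_nonneg B).posSemidef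
  have hSsq : S * S = B := by
    have := by open scoped MatrixOrder in exact CFC.sq_sqrt B hB.posSemidef.nonneg
    rwa [pow_two] at this
  have hSherm : S.IsHermitian := hSsd.1
  have hdetS : S.det * S.det = B.det := by rw [← det_mul, hSsq]
  have hdetSne : S.det ≠ 0 := by
    intro h
    have := hB.det_pos
    rw [← hdetS, h, mul_zero] at this
    exact lt_irrefl _ this
  have hSiS : S⁻¹ * S = 1 := nonsing_inv_mul S (Ne.isUnit hdetSne)
  have hSSi : S * S⁻¹ = 1 := mul_nonsing_inv S (Ne.isUnit hdetSne)
  have hSiherm : (S⁻¹).IsHermitian := hSherm.inv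
  have hSit : S⁻¹ᵀ = S⁻¹ := hSiherm.eq
  set M := S⁻¹ * A * S⁻¹ with hM
  have hAherm : A.IsHermitian := by
    have := hAB.1.add hB.isHermitian
    rwa [sub_add_cancel] at this
  have hMherm : M.IsHermitian := by
    rw [hM, Matrix.IsHermitian, conjTranspose_mul, conjTranspose_mul, hSiherm.eq, hAherm.eq,
      mul_assoc]
  have hM1 : M - 1 = S⁻¹ * (A - B) * S⁻¹ := by
    rw [hM, Matrix.mul_sub, Matrix.sub_mul]
    congr 1
    rw [← hSsq, ← mul_assoc, hSiS, one_mul, hSSi]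
  have hM1psd : (M - 1).PosSemidef := by
    rw [hM1]
    have := hAB.mul_mul_conjTranspose_same S⁻¹
    rwa [hSiherm.eq] at this
  have key := key_lemma d M hMherm hM1psd (S *ᵥ x)
  have hx2 : S⁻¹ *ᵥ (S *ᵥ x) = x := by rw [mulVec_mulVec, hSiS, one_mulVec]
  have hq1 : (S *ᵥ x) ⬝ᵥ M *ᵥ (S *ᵥ x) = x ⬝ᵥ A.mulVec x := by
    rw [hM, ← mulVec_mulVec, ← mulVec_mulVec, hx2, dotProduct_mulVec, ← mulVec_transpose,
      hSit, hx2]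
  have hq2 : (S *ᵥ x) ⬝ᵥ (S *ᵥ x) = x ⬝ᵥ B.mulVec x := by
    have hSt : Sᵀ = S := hSherm.eq
    rw [dotProduct_mulVec, ← mulVec_transpose, hSt, mulVec_mulVec, hSsq, dotProduct_comm]
  have hdetM : M.det = A.det / B.det := by
    rw [hM, det_mul, det_mul, det_nonsing_inv, Ring.inverse_eq_inv']
    field_simp [← hdetS]
    rw [← hdetS]; ring
  rw [hq1, hq2, hdetM] at key
  have hxBx : 0 < x ⬝ᵥ B.mulVec x := by
    have := hB.dotProduct_mulVec_pos hx
    simpa using this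
  rw [div_le_div_iff₀ hxBx hB.det_pos]
  have hdB : 0 < B.det := hB.det_pos
  calc x ⬝ᵥ A.mulVec x * B.det ≤ (A.det / B.det * (x ⬝ᵥ B.mulVec x)) * B.det :=
        mul_le_mul_of_nonneg_right key hdB.le
    _ = A.det * (x ⬝ᵥ B.mulVec x) := by field_simp
end
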